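/- Let U be a finite set, f : 2^U → ℝ≥0 a monotone non-decreasing submodular function, d a metric on U, λ ≥ 0, and b ≥ 1. Define, for a set T of b + 1 elements enumerated as v_1, ..., v_{b+1}, the quantity g(v_i) = [f({v_1,...,v_i}) − f({v_1,...,v_i} \ {v_i})] + λ · Σ_{u ∈ T \ {v_i}} d(v_i, u), and define F(T) = f(T) + λ · Σ_{{u,v} ⊆ T} 2·d(u, v). Then F(T) = Σ_{i=1}^{b+1} g(v_i), and consequently if v_ℓ minimizes g over T and S = T \ {v_ℓ}, then F(S) ≥ ((b − 1)/(b + 1)) · F(T). -/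

import Mathlib

/-- For `T = {v_1, …, v_{b+1}}`, `F(T) = f(T) + λ·Σ_{{u,w}⊆T} 2 d(u,w)` decomposes as
`F(T) = Σ_i g(v_i)` where `g(v_i)` is the `f`-marginal of `v_i` plus `λ` times its
distance to the rest of `T`; consequently removing the minimizer `v_ℓ` of `g` keeps
at least a `(b−1)/(b+1)` fraction of `F(T)`. -/
theorem stmt_5 {X : Type*} [MetricSpace X] [DecidableEq X]
    (f : Finset X → ℝ) (hf0 : f ∅ = 0)
    (hmono : ∀ A B : Finset X, A ⊆ B → f A ≤ f B)
    (hsub : ∀ A B : Finset X, A ⊆ B → ∀ x ∉ B,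
      f (insert x B) - f B ≤ f (insert x A) - f A)
    (lam : ℝ) (hlam : 0 ≤ lam) (b : ℕ) (hb : 1 ≤ b)
    (v : Fin (b + 1) → X) (hv : Function.Injective v)
    (T : Finset X) (hT : T = Finset.image v Finset.univ)
    (g : Fin (b + 1) → ℝ)
    (hg : ∀ i, g i =
      (f (Finset.image v (Finset.univ.filter fun j : Fin (b + 1) => (j : ℕ) < (i : ℕ) + 1)) -
       f (Finset.image v (Finset.univ.filter fun j : Fin (b + 1) => (j : ℕ) < (i : ℕ)))) +
      lam * ∑ u ∈ T.erase (v i), dist (v i) u)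
    (F : Finset X → ℝ)
    (hF : ∀ A : Finset X, F A = f A + lam * ∑ p ∈ A, ∑ q ∈ A, dist p q) :
    F T = ∑ i, g i ∧
    ∀ l : Fin (b + 1), (∀ i, g l ≤ g i) →
      ((b : ℝ) - 1) / ((b : ℝ) + 1) * F T ≤ F (T.erase (v l)) := by
  -- prefix sets
  set P : ℕ → Finset X :=
    fun n => Finset.image v (Finset.univ.filter fun j : Fin (b + 1) => (j : ℕ) < n) with hP
  have hvinj : ∀ x ∈ (Finset.univ : Finset (Fin (b+1))), ∀ y ∈ (Finset.univ : Finset (Fin (b+1))),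
      v x = v y → x = y := fun x _ y _ h => hv h
  have hmemT : ∀ i, v i ∈ T := by
    intro i; rw [hT]; exact Finset.mem_image_of_mem v (Finset.mem_univ i)
  have hP0 : P 0 = ∅ := by simp [hP]
  have hPtop : P (b + 1) = T := by
    rw [hT, hP]
    congr 1
    simp [Finset.filter_true_of_mem, Fin.is_lt, Fin.is_le]
  -- sums over T as sums over indices
  have hsum_img : ∀ (h : X → ℝ), ∑ p ∈ T, h p = ∑ i, h (v i) := by
    intro h; rw [hT, Finset.sum_image hvinj]
  -- erase vs full sum of distances
  have hdiag : ∀ i, ∑ u ∈ T.erase (v i), dist (v i) u = ∑ q ∈ T, dist (v i) q := by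
    intro i
    rw [← Finset.add_sum_erase T _ (hmemT i), dist_self, zero_add]
  -- Part 1: decomposition
  have hdecomp : F T = ∑ i, g i := by
    have htel : ∑ i : Fin (b+1), (f (P ((i:ℕ) + 1)) - f (P (i:ℕ))) = f T := by
      rw [Fin.sum_univ_eq_sum_range (fun n => f (P (n + 1)) - f (P n)) (b+1),
        Finset.sum_range_sub (fun n => f (P n)), hP0, hPtop, hf0, sub_zero]
    have hdist : ∑ i : Fin (b+1), ∑ u ∈ T.erase (v i), dist (v i) u
        = ∑ p ∈ T, ∑ q ∈ T, dist p q := by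
      rw [hsum_img (fun p => ∑ q ∈ T, dist p q)]
      exact Finset.sum_congr rfl fun i _ => hdiag i
    calc F T = f T + lam * ∑ p ∈ T, ∑ q ∈ T, dist p q := hF T
      _ = (∑ i : Fin (b+1), (f (P ((i:ℕ) + 1)) - f (P (i:ℕ))))
            + lam * ∑ i : Fin (b+1), ∑ u ∈ T.erase (v i), dist (v i) u := by
          rw [htel, hdist]
      _ = ∑ i, g i := by
          rw [Finset.mul_sum, ← Finset.sum_add_distrib]
          exact Finset.sum_congr rfl fun i _ => (hg i).symm
  refine ⟨hdecomp, ?_⟩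
  intro l hmin
  set S := T.erase (v l) with hS
  have hvlS : v l ∉ S := Finset.notMem_erase _ _
  have hinsS : insert (v l) S = T := Finset.insert_erase (hmemT l)
  -- prefix facts at l
  have hPlS : P (l : ℕ) ⊆ S := by
    intro x hx
    rw [hP] at hx
    obtain ⟨j, hj, rfl⟩ := Finset.mem_image.mp hx
    rw [Finset.mem_filter] at hj
    refine Finset.mem_erase.mpr ⟨fun h => ?_, hmemT j⟩
    have hjl := hv h
    subst hjl
    exact lt_irrefl _ hj.2
  have hPins : insert (v l) (P (l : ℕ)) = P ((l : ℕ) + 1) := by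
    have hfs : (Finset.univ.filter fun j : Fin (b+1) => (j:ℕ) < (l:ℕ)+1)
        = insert l (Finset.univ.filter fun j : Fin (b+1) => (j:ℕ) < (l:ℕ)) := by
      ext j
      simp only [Finset.mem_filter, Finset.mem_univ, true_and, Finset.mem_insert, Fin.ext_iff]
      omega
    simp only [hP]
    rw [hfs, Finset.image_insert]
  have hsubm : f T - f S ≤ f (P ((l:ℕ)+1)) - f (P (l:ℕ)) := by
    have h := hsub (P (l:ℕ)) S hPlS (v l) hvlS
    rwa [hinsS, hPins] at h
  have hmarg : 0 ≤ f (P ((l:ℕ)+1)) - f (P (l:ℕ)) := by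
    refine sub_nonneg.mpr (hmono _ _ ?_)
    rw [← hPins]; exact Finset.subset_insert _ _
  have hdnn : 0 ≤ ∑ u ∈ S, dist (v l) u := Finset.sum_nonneg fun u _ => dist_nonneg
  have hDT : ∑ p ∈ T, ∑ q ∈ T, dist p q
      = 2 * (∑ u ∈ S, dist (v l) u) + ∑ p ∈ S, ∑ q ∈ S, dist p q := by
    rw [← hinsS]
    simp only [Finset.sum_insert hvlS, dist_self, zero_add, Finset.sum_add_distrib]
    have hc : ∑ p ∈ S, dist p (v l) = ∑ p ∈ S, dist (v l) p :=
      Finset.sum_congr rfl fun p _ => dist_comm p (v l)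
    rw [hc]; ring
  have hgl : g l = (f (P ((l:ℕ)+1)) - f (P (l:ℕ))) + lam * ∑ u ∈ S, dist (v l) u := hg l
  have h2 : F T - 2 * g l ≤ F S := by
    rw [hF T, hF S, hDT, hgl]
    nlinarith [hsubm, hmarg, mul_nonneg hlam hdnn]
  have h1 : ((b:ℝ)+1) * g l ≤ F T := by
    rw [hdecomp]
    calc ((b:ℝ)+1) * g l = ∑ _i : Fin (b+1), g l := by
          rw [Finset.sum_const, Finset.card_univ, Fintype.card_fin, nsmul_eq_mul]
          push_cast; ring
      _ ≤ ∑ i, g i := Finset.sum_le_sum fun i _ => hmin i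
  have hbp : (0:ℝ) < (b:ℝ) + 1 := by positivity
  rw [div_mul_eq_mul_div, div_le_iff₀ hbp]
  nlinarith [mul_le_mul_of_nonneg_left h2 hbp.le, h1]
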